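/- Let T = ℝ/ℤ and let η̄ > 0. Suppose η : T → ℝ is measurable with 0 ≤ η(x) ≤ η̄ for all x, ∫_T η dx = 1, and suppose w : T → ℝ is continuously differentiable with ∫_T η w dx = 0. Then ∫_T η w² dx ≤ η̄² ∫_T (∂_x w)² dx. -/

import Mathlib

open MeasureTheory

/-- **Weighted Poincaré inequality on the torus** (Lemma `prop-kinetic-tx`):
if `η : 𝕋 → ℝ` is measurable with `0 ≤ η ≤ η̄`, total mass `∫_𝕋 η = 1`, and
`w : 𝕋 → ℝ` is `C¹` with `∫_𝕋 η w = 0`, then `∫_𝕋 η w² ≤ η̄² ∫_𝕋 (∂ₓ w)²`.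
Functions on `𝕋 = ℝ/ℤ` are modelled as `1`-periodic functions on `ℝ`,
with `∫_𝕋` the integral over one period. -/
theorem weighted_poincare_torus (ηbar : ℝ) (hηbar : 0 < ηbar)
    (η w : ℝ → ℝ)
    (hη_per : ∀ x : ℝ, η (x + 1) = η x)
    (hw_per : ∀ x : ℝ, w (x + 1) = w x)
    (hη_meas : Measurable η)
    (hη_nonneg : ∀ x : ℝ, 0 ≤ η x)
    (hη_le : ∀ x : ℝ, η x ≤ ηbar)
    (hmass : (∫ x in (0:ℝ)..1, η x) = 1)
    (hw : ContDiff ℝ 1 w)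
    (hmom : (∫ x in (0:ℝ)..1, η x * w x) = 0) :
    (∫ x in (0:ℝ)..1, η x * (w x) ^ 2) ≤ ηbar ^ 2 * ∫ x in (0:ℝ)..1, (deriv w x) ^ 2 := by
  have hwc : Continuous w := hw.continuous
  have hw' : Continuous (deriv w) := hw.continuous_deriv le_rfl
  have hwd : Differentiable ℝ w := hw.differentiable one_ne_zero
  set M : ℝ := ∫ x in (0:ℝ)..1, |deriv w x| with hMdef
  set C : ℝ := ∫ x in (0:ℝ)..1, (deriv w x) ^ 2 with hCdef
  have hMnonneg : 0 ≤ M :=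
    intervalIntegral.integral_nonneg zero_le_one (fun x _ => abs_nonneg _)
  have hCnonneg : 0 ≤ C :=
    intervalIntegral.integral_nonneg zero_le_one (fun x _ => sq_nonneg _)
  have habs_int : IntervalIntegrable (fun x => |deriv w x|) volume 0 1 :=
    (hw'.abs).intervalIntegrable 0 1
  -- multiplication by η preserves interval integrability
  have hmul_int : ∀ g : ℝ → ℝ, Continuous g →
      IntervalIntegrable (fun y => η y * g y) volume 0 1 := by
    intro g hg
    rw [intervalIntegrable_iff]
    have hgint : Integrable g (volume.restrict (Set.uIoc (0:ℝ) 1)) := by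
      exact intervalIntegrable_iff.mp (hg.intervalIntegrable 0 1)
    exact hgint.bdd_mul hη_meas.aestronglyMeasurable.restrict
      (c := ηbar) (Filter.Eventually.of_forall fun y => by
        rw [Real.norm_eq_abs, abs_of_nonneg (hη_nonneg y)]; exact hη_le y)
  have hη_int : IntervalIntegrable η volume 0 1 := by
    simpa [mul_one] using hmul_int (fun _ => 1) continuous_const
  -- Cauchy–Schwarz : M ^ 2 ≤ C
  have hM2 : M ^ 2 ≤ C := by
    have h0 : 0 ≤ ∫ x in (0:ℝ)..1, (|deriv w x| - M) ^ 2 :=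
      intervalIntegral.integral_nonneg zero_le_one (fun x _ => sq_nonneg _)
    have hexp : (∫ x in (0:ℝ)..1, (|deriv w x| - M) ^ 2) = C - 2 * M * M + M ^ 2 := by
      have heq : ∀ x : ℝ, (|deriv w x| - M) ^ 2
          = (deriv w x) ^ 2 - 2 * M * |deriv w x| + M ^ 2 := by
        intro x; rw [sub_sq, sq_abs]; ring
      simp_rw [heq]
      rw [intervalIntegral.integral_add
            (((by exact hw'.pow 2 : Continuous fun x => deriv w x ^ 2).intervalIntegrable 0 1).sub
              (habs_int.const_mul (2 * M))) intervalIntegrable_const,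
          intervalIntegral.integral_sub ((by exact hw'.pow 2 : Continuous fun x => deriv w x ^ 2).intervalIntegrable 0 1)
            (habs_int.const_mul (2 * M)),
          intervalIntegral.integral_const_mul, intervalIntegral.integral_const]
      simp [hMdef, hCdef]
    nlinarith
  -- oscillation bound
  have hdiff : ∀ x ∈ Set.Icc (0:ℝ) 1, ∀ y ∈ Set.Icc (0:ℝ) 1, |w x - w y| ≤ M := by
    intro x hx y hy
    have hftc : (∫ t in y..x, deriv w t) = w x - w y :=
      intervalIntegral.integral_deriv_eq_sub (fun t _ => hwd t)
        (hw'.intervalIntegrable _ _)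
    rw [← hftc]
    have hsub : Set.uIoc y x ⊆ Set.uIoc (0:ℝ) 1 := by
      rw [Set.uIoc, Set.uIoc]
      exact Set.Ioc_subset_Ioc (by simp [le_inf hy.1 hx.1]) (by simp [sup_le hy.2 hx.2])
    calc |(∫ t in y..x, deriv w t)| ≤ |(∫ t in y..x, |deriv w t|)| := by
          simpa [Real.norm_eq_abs] using
            intervalIntegral.norm_integral_le_abs_integral_norm (f := deriv w) (a := y) (b := x)
      _ ≤ |(∫ t in (0:ℝ)..1, |deriv w t|)| :=
          intervalIntegral.abs_integral_mono_interval hsub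
            (Filter.Eventually.of_forall fun t => abs_nonneg _) habs_int
      _ = M := abs_of_nonneg hMnonneg
  -- pointwise bound on w
  have hwbound : ∀ x ∈ Set.Icc (0:ℝ) 1, (w x) ^ 2 ≤ C := by
    intro x hx
    have key : (∫ y in (0:ℝ)..1, η y * (w x - w y)) = w x := by
      simp_rw [mul_sub]
      rw [intervalIntegral.integral_sub (hmul_int _ continuous_const) (hmul_int _ hwc),
        intervalIntegral.integral_mul_const, hmass, one_mul, hmom, sub_zero]
    have habs : |w x| ≤ M := by
      rw [← key]
      calc |(∫ y in (0:ℝ)..1, η y * (w x - w y))|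
          ≤ ∫ y in (0:ℝ)..1, |η y * (w x - w y)| :=
            intervalIntegral.abs_integral_le_integral_abs zero_le_one
        _ ≤ ∫ y in (0:ℝ)..1, η y * M := by
            apply intervalIntegral.integral_mono_on zero_le_one
              (hmul_int _ (continuous_const.sub hwc)).abs (hmul_int _ continuous_const)
            intro y hy
            rw [abs_mul, abs_of_nonneg (hη_nonneg y)]
            exact mul_le_mul_of_nonneg_left (hdiff x hx y hy) (hη_nonneg y)
        _ = M := by rw [intervalIntegral.integral_mul_const, hmass, one_mul]
    calc (w x) ^ 2 = |w x| ^ 2 := (sq_abs _).symm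
      _ ≤ M ^ 2 := pow_le_pow_left₀ (abs_nonneg _) habs 2
      _ ≤ C := hM2
  have h1le : (1:ℝ) ≤ ηbar := by
    have h := intervalIntegral.integral_mono_on (μ := volume) zero_le_one hη_int
      intervalIntegrable_const (fun x _ => hη_le x)
    rw [hmass] at h
    simpa using h
  have hfinal : (∫ x in (0:ℝ)..1, η x * (w x) ^ 2) ≤ C := by
    calc (∫ x in (0:ℝ)..1, η x * (w x) ^ 2) ≤ ∫ x in (0:ℝ)..1, η x * C :=
        intervalIntegral.integral_mono_on zero_le_one (hmul_int _ (hwc.pow 2))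
          (hmul_int _ continuous_const)
          (fun x hx => mul_le_mul_of_nonneg_left (hwbound x hx) (hη_nonneg x))
      _ = C := by rw [intervalIntegral.integral_mul_const, hmass, one_mul]
  calc (∫ x in (0:ℝ)..1, η x * (w x) ^ 2) ≤ C := hfinal
    _ = 1 * C := (one_mul C).symm
    _ ≤ ηbar ^ 2 * C := mul_le_mul_of_nonneg_right (by nlinarith) hCnonneg
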